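/- For every n ≥ 2 and every k with ⌈n/2⌉ ≤ k ≤ n−2, there exists an n×n partial latin square whose first k rows are filled, with exactly 2 filled cells in row k+1 and no other filled cells, which cannot be extended to a partial latin square with the first k+1 rows completely filled. -/

import Mathlib

/-- A partial latin square of order `n`. -/
def IsPLS (n : ℕ) (S : ℕ → ℕ → Option ℕ) : Prop :=
  (∀ i j s, S i j = some s →
      i ∈ Finset.Icc 1 n ∧ j ∈ Finset.Icc 1 n ∧ s ∈ Finset.Icc 1 n) ∧
  (∀ i j j' s, S i j = some s → S i j' = some s → j = j') ∧
  (∀ i i' j s, S i j = some s → S i' j = some s → i = i')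

/-- Row `r`, column `j` of the bottom `m` rows of our special latin square. -/
def Brow (k m r j : ℕ) : ℕ :=
  if j + 1 < m then (if r ≤ j then j - r else j + m - r)
  else if (if j - (m - 1) + r ≤ k then j - (m - 1) + r else j - (m - 1) + r - (k + 1)) = 0
    then m - 1 - r
    else m - 1 + (if j - (m - 1) + r ≤ k then j - (m - 1) + r else j - (m - 1) + r - (k + 1))

lemma Brow_lt {k m r j : ℕ} (hm : 2 ≤ m) (hmk : m ≤ k) (hr : r < m) (hj : j < k + m) :
    Brow k m r j < k + m := by
  unfold Brow
  split_ifs <;> omega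

lemma Brow_small {k m r j : ℕ} (hr : r < m) (hj : j + 1 < m) :
    Brow k m r j < m := by
  unfold Brow
  split_ifs <;> omega

lemma Brow_row_inj {k m r j j' : ℕ} (hm : 2 ≤ m) (hmk : m ≤ k) (hr : r < m)
    (hj : j < k + m) (hj' : j' < k + m) (h : Brow k m r j = Brow k m r j') : j = j' := by
  unfold Brow at h
  split_ifs at h <;> omega

lemma Brow_col_inj {k m r r' j : ℕ} (hm : 2 ≤ m) (hmk : m ≤ k) (hr : r < m) (hr' : r' < m)
    (hj : j < k + m) (h : Brow k m r j = Brow k m r' j) : r = r' := by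
  unfold Brow at h
  split_ifs at h <;> omega

lemma Brow_val1 {k m : ℕ} (hm : 2 ≤ m) (hmk : m ≤ k) : Brow k m 0 (m - 1) = m - 1 := by
  unfold Brow
  split_ifs <;> omega

lemma Brow_val2 {k m : ℕ} (hm : 2 ≤ m) (hmk : m ≤ k) : Brow k m 1 (k + m - 1) = m - 2 := by
  unfold Brow
  split_ifs <;> omega

/-- An `r × n` latin rectangle (0-indexed, entries in `[0,n)`). -/
def IsRect (n r : ℕ) (M : ℕ → ℕ → ℕ) : Prop :=
  (∀ i < r, ∀ j < n, M i j < n) ∧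
  (∀ i < r, ∀ j < n, ∀ j' < n, M i j = M i j' → j = j') ∧
  (∀ j < n, ∀ i < r, ∀ i' < r, M i j = M i' j → i = i')

/-- Each row of a latin rectangle is a permutation: every value `< n` occurs. -/
lemma IsRect.row_surj {n r : ℕ} {M : ℕ → ℕ → ℕ} (h : IsRect n r M)
    {i v : ℕ} (hi : i < r) (hv : v < n) : ∃ j < n, M i j = v := by
  classical
  have himg : (Finset.range n).image (fun j => M i j) = Finset.range n := by
    apply Finset.eq_of_subset_of_card_le
    · intro x hx
      simp only [Finset.mem_image, Finset.mem_range] at hx ⊢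
      obtain ⟨j, hj, rfl⟩ := hx
      exact h.1 i hi j hj
    · rw [Finset.card_image_of_injOn]
      intro a ha b hb hab
      exact h.2.1 i hi a (Finset.mem_range.mp ha) b (Finset.mem_range.mp hb) hab
  have : v ∈ (Finset.range n).image (fun j => M i j) := by
    rw [himg]; exact Finset.mem_range.mpr hv
  simpa [Finset.mem_image, Finset.mem_range] using this

/-- Each column of an `n × n` latin square is a permutation. -/
lemma IsRect.col_surj {n : ℕ} {M : ℕ → ℕ → ℕ} (h : IsRect n n M)
    {j v : ℕ} (hj : j < n) (hv : v < n) : ∃ i < n, M i j = v := by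
  classical
  have himg : (Finset.range n).image (fun i => M i j) = Finset.range n := by
    apply Finset.eq_of_subset_of_card_le
    · intro x hx
      simp only [Finset.mem_image, Finset.mem_range] at hx ⊢
      obtain ⟨i, hi, rfl⟩ := hx
      exact h.1 i hi j hj
    · rw [Finset.card_image_of_injOn]
      intro a ha b hb hab
      exact h.2.2 j hj a (Finset.mem_range.mp ha) b (Finset.mem_range.mp hb) hab
  have : v ∈ (Finset.range n).image (fun i => M i j) := by
    rw [himg]; exact Finset.mem_range.mpr hv
  simpa [Finset.mem_image, Finset.mem_range] using this

/-- Hall-based extension of a latin rectangle by one row. -/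
lemma rect_extend {n r : ℕ} {M : ℕ → ℕ → ℕ} (h : IsRect n r M) (hrn : r < n) :
    ∃ M', IsRect n (r + 1) M' ∧ ∀ i < r, ∀ j, M' i j = M i j := by
  classical
  -- availability sets
  set t : Fin n → Finset ℕ :=
    fun j => (Finset.range n).filter (fun v => ∀ i < r, M i j.1 ≠ v) with ht
  have hcard : ∀ j : Fin n, (t j).card = n - r := by
    intro j
    have : t j = Finset.range n \ (Finset.range r).image (fun i => M i j.1) := by
      ext v
      simp only [ht, Finset.mem_filter, Finset.mem_sdiff, Finset.mem_image,
        Finset.mem_range]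
      exact ⟨fun ⟨hv, h2⟩ => ⟨hv, fun he => by obtain ⟨i, hi, hm⟩ := he; exact h2 i hi hm⟩,
        fun ⟨hv, h2⟩ => ⟨hv, fun i hi hm => h2 ⟨i, hi, hm⟩⟩⟩
    rw [this, Finset.card_sdiff_of_subset]
    · rw [Finset.card_image_of_injOn, Finset.card_range, Finset.card_range]
      intro a ha b hb hab
      exact h.2.2 j.1 j.2 a (Finset.mem_range.mp ha) b (Finset.mem_range.mp hb) hab
    · intro v hv
      simp only [Finset.mem_image, Finset.mem_range] at hv
      obtain ⟨i, hi, rfl⟩ := hv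
      exact Finset.mem_range.mpr (h.1 i hi j.1 j.2)
  -- each symbol is available in exactly n - r columns; we only need the upper bound
  have hsymb : ∀ v < n, (Finset.univ.filter (fun j : Fin n => v ∈ t j)).card ≤ n - r := by
    intro v hv
    have hpres : r ≤ (Finset.univ.filter (fun j : Fin n => ¬ v ∈ t j)).card := by
      -- map each row to the column where v sits in that row
      have hf : ∀ i : Fin r, ∃ j < n, M i.1 j = v := fun i => h.row_surj i.2 hv
      choose f hfn hfv using hf
      have : Finset.univ.image (fun i : Fin r => (⟨f i, hfn i⟩ : Fin n)) ⊆
          Finset.univ.filter (fun j : Fin n => ¬ v ∈ t j) := by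
        intro x hx
        simp only [Finset.mem_image, Finset.mem_univ, true_and] at hx
        obtain ⟨i, rfl⟩ := hx
        simp only [Finset.mem_filter, Finset.mem_univ, true_and, ht, Finset.mem_range,
          not_and, not_forall]
        intro _
        exact ⟨i.1, i.2, by simpa using (hfv i)⟩
      have hinj : Function.Injective (fun i : Fin r => (⟨f i, hfn i⟩ : Fin n)) := by
        intro a b hab
        have hfab : f a = f b := congrArg Fin.val hab
        have hM : M a.1 (f a) = M b.1 (f a) := by rw [hfv a, hfab, hfv b]
        exact Fin.ext (h.2.2 (f a) (hfn a) a.1 a.2 b.1 b.2 hM)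
      calc r = (Finset.univ.image (fun i : Fin r => (⟨f i, hfn i⟩ : Fin n))).card := by
                rw [Finset.card_image_of_injective _ hinj, Finset.card_univ, Fintype.card_fin]
           _ ≤ _ := Finset.card_le_card ‹_›
    have htot := Finset.card_filter_add_card_filter_not
      (s := (Finset.univ : Finset (Fin n))) (p := fun j : Fin n => v ∈ t j)
    simp only [Finset.card_univ, Fintype.card_fin] at htot
    omega
  -- Hall's condition
  have hall : ∀ s : Finset (Fin n), s.card ≤ (s.biUnion t).card := by
    intro s
    have key : s.card * (n - r) ≤ (s.biUnion t).card * (n - r) := by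
      calc s.card * (n - r) = ∑ j ∈ s, (t j).card := by
            rw [Finset.sum_congr rfl (fun j _ => hcard j), Finset.sum_const, smul_eq_mul]
        _ = ∑ j ∈ s, ((s.biUnion t).filter (fun v => v ∈ t j)).card := by
            apply Finset.sum_congr rfl
            intro j hj
            congr 1
            ext v
            simp only [Finset.mem_filter, Finset.mem_biUnion]
            exact ⟨fun hv => ⟨⟨j, hj, hv⟩, hv⟩, fun h => h.2⟩
        _ = ∑ v ∈ s.biUnion t, (s.filter (fun j => v ∈ t j)).card := by
            simp only [Finset.card_filter]
            rw [Finset.sum_comm]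
        _ ≤ ∑ v ∈ s.biUnion t, (n - r) := by
            apply Finset.sum_le_sum
            intro v hv
            have hvn : v < n := by
              simp only [Finset.mem_biUnion, ht, Finset.mem_filter, Finset.mem_range] at hv
              obtain ⟨j, _, hv, _⟩ := hv
              exact hv
            calc (s.filter (fun j => v ∈ t j)).card
                ≤ (Finset.univ.filter (fun j : Fin n => v ∈ t j)).card :=
                  Finset.card_le_card (Finset.filter_subset_filter _ (Finset.subset_univ s))
              _ ≤ n - r := hsymb v hvn
        _ = (s.biUnion t).card * (n - r) := by rw [Finset.sum_const, smul_eq_mul]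
    exact Nat.le_of_mul_le_mul_right key (by omega)
  obtain ⟨f, hfinj, hft⟩ := (Finset.all_card_le_biUnion_card_iff_exists_injective t).mp hall
  refine ⟨fun i j => if i = r then (if hj : j < n then f ⟨j, hj⟩ else 0) else M i j, ?_, ?_⟩
  · refine ⟨?_, ?_, ?_⟩
    · intro i hi j hj
      by_cases hir : i = r
      · simp only [hir, if_pos rfl, dif_pos hj]
        have := hft ⟨j, hj⟩
        simp only [ht, Finset.mem_filter, Finset.mem_range] at this
        exact this.1
      · simp only [if_neg hir]
        exact h.1 i (by omega) j hj
    · intro i hi j hj j' hj' heq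
      by_cases hir : i = r
      · simp only [hir, if_pos rfl, dif_pos hj, dif_pos hj'] at heq
        exact congrArg Fin.val (hfinj heq)
      · simp only [if_neg hir] at heq
        exact h.2.1 i (by omega) j hj j' hj' heq
    · intro j hj i hi i' hi' heq
      by_cases hir : i = r <;> by_cases hir' : i' = r
      · omega
      · exfalso
        simp only [hir, if_pos rfl, dif_pos hj, if_neg hir'] at heq
        have := hft ⟨j, hj⟩
        simp only [ht, Finset.mem_filter, Finset.mem_range] at this
        exact this.2 i' (by omega) heq.symm
      · exfalso
        simp only [hir', if_pos rfl, dif_pos hj, if_neg hir] at heq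
        have := hft ⟨j, hj⟩
        simp only [ht, Finset.mem_filter, Finset.mem_range] at this
        exact this.2 i (by omega) heq
      · simp only [if_neg hir, if_neg hir'] at heq
        exact h.2.2 j hj i (by omega) i' (by omega) heq
  · intro i hi j
    simp [show i ≠ r by omega]

/-- The special latin square: bottom `m` rows given by `Brow`, completed on top. -/
lemma exists_square (k m : ℕ) (hm : 2 ≤ m) (hmk : m ≤ k) :
    ∃ M, IsRect (k + m) (k + m) M ∧ ∀ i < m, ∀ j, M i j = Brow k m i j := by
  suffices h : ∀ d ≤ k, ∃ M, IsRect (k + m) (m + d) M ∧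
      ∀ i < m, ∀ j, M i j = Brow k m i j by
    obtain ⟨M, hM, hB⟩ := h k le_rfl
    rw [show m + k = k + m by omega] at hM
    exact ⟨M, hM, hB⟩
  intro d
  induction d with
  | zero =>
    intro _
    refine ⟨fun i j => Brow k m i j, ⟨?_, ?_, ?_⟩, fun _ _ _ => rfl⟩
    · intro i hi j hj
      exact Brow_lt hm hmk (by omega) hj
    · intro i hi j hj j' hj' heq
      exact Brow_row_inj hm hmk (by omega) hj hj' heq
    · intro j hj i hi i' hi' heq
      exact Brow_col_inj hm hmk (by omega) (by omega) hj heq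
  | succ d ih =>
    intro hd
    obtain ⟨M, hM, hB⟩ := ih (by omega)
    obtain ⟨M', hM', hagree⟩ := rect_extend hM (by omega)
    rw [show m + d + 1 = m + (d + 1) by omega] at hM'
    exact ⟨M', hM', fun i hi j => (hagree i (by omega) j).trans (hB i hi j)⟩

/-- For every `n ≥ 2` and `⌈n/2⌉ ≤ k ≤ n − 2` there is a partial latin square
of order `n` with the first `k` rows filled, exactly two filled cells in row
`k+1` and no other filled cells, which cannot be extended to a partial latin
square whose first `k+1` rows are completely filled.  (This says
`f_{k,n} = 1` in this range.) -/
theorem exists_nonextendable_pls (n k : ℕ) (hn : 2 ≤ n)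
    (hk1 : (n + 1) / 2 ≤ k) (hk2 : k ≤ n - 2) :
    ∃ S : ℕ → ℕ → Option ℕ, IsPLS n S ∧
      (∀ i ∈ Finset.Icc 1 k, ∀ j ∈ Finset.Icc 1 n, (S i j).isSome) ∧
      ((Finset.Icc 1 n).filter (fun j => (S (k + 1) j).isSome)).card = 2 ∧
      (∀ i, k + 1 < i → ∀ j, S i j = none) ∧
      ¬ ∃ S' : ℕ → ℕ → Option ℕ, IsPLS n S' ∧
          (∀ i j s, S i j = some s → S' i j = some s) ∧
          (∀ i ∈ Finset.Icc 1 (k + 1), ∀ j ∈ Finset.Icc 1 n,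
            (S' i j).isSome) := by
  classical
  set m := n - k with hm
  have hm2 : 2 ≤ m := by omega
  have hn2k : n ≤ 2 * k := by omega
  have hmk : m ≤ k := by omega
  have hnkm : n = k + m := by omega
  obtain ⟨M, hM, hMB⟩ := exists_square k m hm2 hmk
  rw [← hnkm] at hM
  have hv1 : M 0 (m - 1) = m - 1 := by
    rw [hMB 0 (by omega)]; exact Brow_val1 hm2 hmk
  have hv2 : M 1 (n - 1) = m - 2 := by
    rw [hMB 1 (by omega), show n - 1 = k + m - 1 by omega]; exact Brow_val2 hm2 hmk
  have hc1 : ∀ i < n, M i (m - 1) = m - 1 → i = 0 := by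
    intro i hi hMi
    exact hM.2.2 (m - 1) (by omega) i hi 0 (by omega) (by rw [hMi, hv1])
  have hc2 : ∀ i < n, M i (n - 1) = m - 2 → i = 1 := by
    intro i hi hMi
    exact hM.2.2 (n - 1) (by omega) i hi 1 (by omega) (by rw [hMi, hv2])
  set S : ℕ → ℕ → Option ℕ := fun i j =>
    if 1 ≤ i ∧ i ≤ k ∧ 1 ≤ j ∧ j ≤ n then some (M (i + m - 1) (j - 1) + 1)
    else if i = k + 1 ∧ j = m then some m
    else if i = k + 1 ∧ j = n then some (m - 1)
    else none with hSdef
  have hS1 : ∀ i j, 1 ≤ i → i ≤ k → 1 ≤ j → j ≤ n →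
      S i j = some (M (i + m - 1) (j - 1) + 1) := by
    intro i j h1 h2 h3 h4
    simp only [hSdef]
    rw [if_pos ⟨h1, h2, h3, h4⟩]
  have hS2 : S (k + 1) m = some m := by
    simp only [hSdef]
    rw [if_neg (by omega)]
    simp
  have hS3 : S (k + 1) n = some (m - 1) := by
    simp only [hSdef]
    rw [if_neg (by omega), if_neg (by simp only [true_and]; omega)]
    simp
  have hSnone : ∀ i j, ¬(1 ≤ i ∧ i ≤ k ∧ 1 ≤ j ∧ j ≤ n) → ¬(i = k + 1 ∧ j = m) →
      ¬(i = k + 1 ∧ j = n) → S i j = none := by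
    intro i j p1 p2 p3
    simp only [hSdef]
    rw [if_neg p1, if_neg p2, if_neg p3]
  have hSchar : ∀ i j s, S i j = some s →
      (1 ≤ i ∧ i ≤ k ∧ 1 ≤ j ∧ j ≤ n ∧ s = M (i + m - 1) (j - 1) + 1) ∨
      (i = k + 1 ∧ j = m ∧ s = m) ∨ (i = k + 1 ∧ j = n ∧ s = m - 1) := by
    intro i j s h
    by_cases p1 : 1 ≤ i ∧ i ≤ k ∧ 1 ≤ j ∧ j ≤ n
    · left
      have := hS1 i j p1.1 p1.2.1 p1.2.2.1 p1.2.2.2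
      rw [this] at h
      exact ⟨p1.1, p1.2.1, p1.2.2.1, p1.2.2.2, (Option.some_inj.mp h).symm⟩
    · by_cases p2 : i = k + 1 ∧ j = m
      · right; left
        rw [p2.1, p2.2, hS2] at h
        exact ⟨p2.1, p2.2, (Option.some_inj.mp h).symm⟩
      · by_cases p3 : i = k + 1 ∧ j = n
        · right; right
          rw [p3.1, p3.2, hS3] at h
          exact ⟨p3.1, p3.2, (Option.some_inj.mp h).symm⟩
        · rw [hSnone i j p1 p2 p3] at h
          cases h
  have hMlt : ∀ i < n, ∀ j < n, M i j < n := hM.1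
  refine ⟨S, ⟨?_, ?_, ?_⟩, ?_, ?_, ?_, ?_⟩
  · -- bounds
    intro i j s h
    rcases hSchar i j s h with ⟨h1, h2, h3, h4, hs⟩ | ⟨hi, hj, hs⟩ | ⟨hi, hj, hs⟩
    · have := hMlt (i + m - 1) (by omega) (j - 1) (by omega)
      simp only [Finset.mem_Icc]
      omega
    · simp only [Finset.mem_Icc]; omega
    · simp only [Finset.mem_Icc]; omega
  · -- row injectivity
    intro i j j' s h h'
    rcases hSchar i j s h with ⟨h1, h2, h3, h4, hs⟩ | ⟨hi, hj, hs⟩ | ⟨hi, hj, hs⟩ <;>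
      rcases hSchar i j' s h' with ⟨g1, g2, g3, g4, gs⟩ | ⟨gi, gj, gs⟩ | ⟨gi, gj, gs⟩
    · have := hM.2.1 (i + m - 1) (by omega) (j - 1) (by omega) (j' - 1) (by omega) (by omega)
      omega
    · omega
    · omega
    · omega
    · omega
    · omega
    · omega
    · omega
    · omega
  · -- column injectivity
    intro i i' j s h h'
    rcases hSchar i j s h with ⟨h1, h2, h3, h4, hs⟩ | ⟨hi, hj, hs⟩ | ⟨hi, hj, hs⟩ <;>
      rcases hSchar i' j s h' with ⟨g1, g2, g3, g4, gs⟩ | ⟨gi, gj, gs⟩ | ⟨gi, gj, gs⟩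
    · have := hM.2.2 (j - 1) (by omega) (i + m - 1) (by omega) (i' + m - 1) (by omega)
        (by omega)
      omega
    · rw [gj] at hs
      have hMe : M (i + m - 1) (m - 1) = m - 1 := by omega
      have := hc1 (i + m - 1) (by omega) hMe
      omega
    · rw [gj] at hs
      have hMe : M (i + m - 1) (n - 1) = m - 2 := by omega
      have := hc2 (i + m - 1) (by omega) hMe
      omega
    · rw [hj] at gs
      have hMe : M (i' + m - 1) (m - 1) = m - 1 := by omega
      have := hc1 (i' + m - 1) (by omega) hMe
      omega
    · omega
    · omega
    · rw [hj] at gs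
      have hMe : M (i' + m - 1) (n - 1) = m - 2 := by omega
      have := hc2 (i' + m - 1) (by omega) hMe
      omega
    · omega
    · omega
  · -- first k rows filled
    intro i hi j hj
    rw [Finset.mem_Icc] at hi hj
    rw [hS1 i j hi.1 hi.2 hj.1 hj.2]
    rfl
  · -- exactly two cells in row k+1
    have hset : (Finset.Icc 1 n).filter (fun j => (S (k + 1) j).isSome) = {m, n} := by
      ext j
      simp only [Finset.mem_filter, Finset.mem_Icc, Finset.mem_insert, Finset.mem_singleton]
      constructor
      · rintro ⟨⟨hj1, hj2⟩, hsome⟩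
        by_contra hc
        push_neg at hc
        have hnone : S (k + 1) j = none :=
          hSnone _ _ (by omega) (by omega) (by omega)
        rw [hnone] at hsome
        simp at hsome
      · rintro (rfl | rfl)
        · exact ⟨⟨by omega, by omega⟩, by rw [hS2]; rfl⟩
        · exact ⟨⟨by omega, by omega⟩, by rw [hS3]; rfl⟩
    rw [hset, Finset.card_insert_of_notMem (by simp only [Finset.mem_singleton]; omega),
      Finset.card_singleton]
  · -- rows below k+1 empty
    intro i hi j
    exact hSnone _ _ (by omega) (by omega) (by omega)
  · -- non-extendability
    rintro ⟨S', hP', hext, hfill⟩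
    set g : ℕ → ℕ := fun j => (S' (k + 1) j).getD 0 with hgdef
    have hg : ∀ j, 1 ≤ j → j ≤ n → S' (k + 1) j = some (g j) := by
      intro j h1 h2
      have := hfill (k + 1) (by rw [Finset.mem_Icc]; omega) j (by rw [Finset.mem_Icc]; omega)
      obtain ⟨s, hs⟩ := Option.isSome_iff_exists.mp this
      rw [hs]
      simp [hgdef, hs]
    have hgm : g m = m := by
      have h := hext _ _ _ hS2
      simp [hgdef, h]
    have hgn : g n = m - 1 := by
      have h := hext _ _ _ hS3
      simp [hgdef, h]
    have hginj : ∀ j, 1 ≤ j → j ≤ n → ∀ j', 1 ≤ j' → j' ≤ n → g j = g j' → j = j' := by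
      intro j h1 h2 j' h3 h4 heq
      exact hP'.2.1 (k + 1) j j' (g j) (hg j h1 h2) (heq ▸ hg j' h3 h4)
    have hgbd : ∀ j, 1 ≤ j → j ≤ n → 1 ≤ g j ∧ g j ≤ n := by
      intro j h1 h2
      have := (hP'.1 (k + 1) j (g j) (hg j h1 h2)).2.2
      rw [Finset.mem_Icc] at this
      exact this
    have hgsmall : ∀ j, 1 ≤ j → j ≤ m - 1 → g j ≤ m := by
      intro j h1 h2
      have hjn : j ≤ n := by omega
      have hb := hgbd j h1 hjn
      have hnot : ∀ i', m ≤ i' → i' < n → M i' (j - 1) ≠ g j - 1 := by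
        intro i' hmi hni heq
        have h1' : S (i' - m + 1) j = some (M (i' - m + 1 + m - 1) (j - 1) + 1) :=
          hS1 _ _ (by omega) (by omega) h1 hjn
        rw [show i' - m + 1 + m - 1 = i' by omega] at h1'
        have h2' := hext _ _ _ h1'
        rw [show M i' (j - 1) + 1 = g j by omega] at h2'
        have := hP'.2.2 (i' - m + 1) (k + 1) j (g j) h2' (hg j h1 hjn)
        omega
      obtain ⟨i0, hi0, hMi0⟩ := hM.col_surj (show j - 1 < n by omega)
        (show g j - 1 < n by omega)
      have hi0m : i0 < m := by
        by_contra hc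
        exact hnot i0 (by omega) hi0 hMi0
      have hBi0 : M i0 (j - 1) = Brow k m i0 (j - 1) := hMB i0 hi0m (j - 1)
      have hlt : Brow k m i0 (j - 1) < m := Brow_small hi0m (by omega)
      omega
    have hcard : (Finset.Icc 1 (m - 1)).card ≤ (Finset.Icc 1 (m - 2)).card := by
      apply Finset.card_le_card_of_injOn g
      · intro j hj
        rw [Finset.mem_coe, Finset.mem_Icc] at hj ⊢
        have hjn : j ≤ n := by omega
        have hb := hgbd j hj.1 hjn
        have hs := hgsmall j hj.1 hj.2
        have hne1 : g j ≠ m := by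
          intro he
          have := hginj j hj.1 hjn m (by omega) (by omega) (he.trans hgm.symm)
          omega
        have hne2 : g j ≠ m - 1 := by
          intro he
          have := hginj j hj.1 hjn n (by omega) (by omega) (he.trans hgn.symm)
          omega
        omega
      · intro a ha b hb heq
        simp only [Finset.coe_Icc, Set.mem_Icc] at ha hb
        exact hginj a ha.1 (by omega) b hb.1 (by omega) heq
    rw [Nat.card_Icc, Nat.card_Icc] at hcard
    omega
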